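/- The number of potential maximal cliques of the graph G_k is Ω(4^k); more precisely, it is at least 3^{-3} · Σ_{i=0}^{k−3} C(k,i) · 3^{k−i}, and hence at least c · 4^k for some constant c > 0 and all sufficiently large k. -/

import Mathlib

/-- The graph `H` with vertices of `Ω` made isolated (edges within `V \ Ω`). -/
def restrict {V : Type*} (H : SimpleGraph V) (Ω : Set V) : SimpleGraph V where
  Adj a b := H.Adj a b ∧ a ∉ Ω ∧ b ∉ Ω
  symm := ⟨fun _ _ ⟨h, ha, hb⟩ => ⟨h.symm, hb, ha⟩⟩
  loopless := ⟨fun a h => H.irrefl h.1⟩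

/-- `C` is the vertex set of a connected component of `H \ Ω`. -/
def IsCompOf {V : Type*} (H : SimpleGraph V) (Ω C : Set V) : Prop :=
  ∃ a, a ∉ Ω ∧ C = {b | b ∉ Ω ∧ (restrict H Ω).Reachable a b}

/-- Neighborhood of a vertex set: vertices outside `C` adjacent to some vertex of `C`. -/
def nbhd {V : Type*} (H : SimpleGraph V) (C : Set V) : Set V :=
  {w | w ∉ C ∧ ∃ c ∈ C, H.Adj w c}

/-- `Ω` is a potential maximal clique of `H`. -/
def IsPMC {V : Type*} (H : SimpleGraph V) (Ω : Set V) : Prop :=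
  (∀ C, IsCompOf H Ω C → nbhd H C ≠ Ω) ∧
  (∀ u ∈ Ω, ∀ v ∈ Ω, u ≠ v →
    H.Adj u v ∨ ∃ C, IsCompOf H Ω C ∧ u ∈ nbhd H C ∧ v ∈ nbhd H C)

/-- A PMC is free if every vertex of `Ω` has a neighbor outside `Ω`. -/
def IsFree {V : Type*} (H : SimpleGraph V) (Ω : Set V) : Prop :=
  ∀ v ∈ Ω, ∃ w, w ∉ Ω ∧ H.Adj v w

/-- Vertices of `G_k`: `[k]` together with the 2-element subsets of `[k]`. -/
abbrev GkV (k : ℕ) := Fin k ⊕ {S : Finset (Fin k) // S.card = 2}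

/-- The incidence graph of 2-element subsets of `[k]` over `[k]`. -/
def Gk (k : ℕ) : SimpleGraph (GkV k) where
  Adj a b := match a, b with
    | .inl i, .inr S => i ∈ S.val
    | .inr S, .inl i => i ∈ S.val
    | _, _ => False
  symm := ⟨by rintro (i|S) (j|T) h <;> simp_all⟩
  loopless := ⟨by rintro (i|S) h <;> simp_all⟩

namespace PMCAux
variable {k : ℕ}

/-- membership predicate of our candidate PMC -/
def OmegaP (A : Finset (Fin k)) (f : Fin k → Fin 3) : GkV k → Prop
  | .inl a => a ∈ A
  | .inr S => ∃ x ∈ S.1, ∃ y ∈ S.1, x ∉ A ∧ y ∉ A ∧ f x ≠ f y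

def Omega (A : Finset (Fin k)) (f : Fin k → Fin 3) : Set (GkV k) := {v | OmegaP A f v}

lemma mem_omega_inl {A : Finset (Fin k)} {f} {a : Fin k} :
    (Sum.inl a : GkV k) ∈ Omega A f ↔ a ∈ A := Iff.rfl

def pairV (x y : Fin k) (h : x ≠ y) : GkV k :=
  .inr ⟨{x, y}, Finset.card_pair h⟩

lemma mem_pair3 {S : Finset (Fin k)} {u v w : Fin k} (hS : S.card = 2)
    (hu : u ∈ S) (hv : v ∈ S) (hw : w ∈ S) (huv : u ≠ v) : w = u ∨ w = v := by
  have hsub : ({u, v} : Finset (Fin k)) ⊆ S := by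
    intro z hz; rcases Finset.mem_insert.1 hz with h | h
    · exact h ▸ hu
    · exact (Finset.mem_singleton.1 h) ▸ hv
  have : ({u, v} : Finset (Fin k)) = S :=
    Finset.eq_of_subset_of_card_le hsub (by rw [hS, Finset.card_pair huv])
  have := this ▸ hw
  rcases Finset.mem_insert.1 this with h | h
  · exact Or.inl h
  · exact Or.inr (Finset.mem_singleton.1 h)

lemma omega_pair_iff {A : Finset (Fin k)} {f} {x y : Fin k} (hxy : x ≠ y) :
    (pairV x y hxy ∈ Omega A f) ↔ (x ∉ A ∧ y ∉ A ∧ f x ≠ f y) := by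
  constructor
  · rintro ⟨u, hu, v, hv, huA, hvA, hf⟩
    have huv : u ≠ v := fun h => hf (h ▸ rfl)
    have h2 : ({x, y} : Finset (Fin k)).card = 2 := Finset.card_pair hxy
    simp only [pairV, Finset.mem_insert, Finset.mem_singleton] at hu hv
    rcases hu with rfl | rfl <;> rcases hv with rfl | rfl
    · exact absurd rfl huv
    · exact ⟨huA, hvA, hf⟩
    · exact ⟨hvA, huA, fun h => hf (h.symm)⟩
    · exact absurd rfl huv
  · rintro ⟨hxA, hyA, hf⟩
    exact ⟨x, by simp [pairV], y, by simp [pairV], hxA, hyA, hf⟩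

/-- the component of color c -/
def CompP (A : Finset (Fin k)) (f : Fin k → Fin 3) (c : Fin 3) : GkV k → Prop
  | .inl y => y ∉ A ∧ f y = c
  | .inr S => ¬ OmegaP A f (.inr S) ∧ ∃ y ∈ S.1, y ∉ A ∧ f y = c

lemma compP_not_omega {A : Finset (Fin k)} {f} {c} {v : GkV k} (h : CompP A f c v) :
    v ∉ Omega A f := by
  cases v with
  | inl a => exact h.1
  | inr S => exact h.1

lemma compP_closed {A : Finset (Fin k)} {f} {c} {v w : GkV k} (hv : CompP A f c v)
    (h : (restrict (Gk k) (Omega A f)).Adj v w) : CompP A f c w := by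
  obtain ⟨hadj, _, hwΩ⟩ := h
  cases v with
  | inl x =>
    cases w with
    | inl y => exact absurd hadj (fun h => h)
    | inr S =>
      exact ⟨hwΩ, x, hadj, hv.1, hv.2⟩
  | inr S =>
    cases w with
    | inr T => exact absurd hadj (fun h => h)
    | inl z =>
      obtain ⟨hSΩ, y, hyS, hyA, hyc⟩ := hv
      have hzS : z ∈ S.1 := hadj
      have hzA : z ∉ A := fun hz => hwΩ hz
      refine ⟨hzA, ?_⟩
      by_cases hzy : z = y
      · exact hzy ▸ hyc
      · by_contra hzc
        exact hSΩ ⟨y, hyS, z, hzS, hyA, hzA, fun h => hzc (h.symm.trans hyc)⟩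

lemma compP_reach {A : Finset (Fin k)} {f} {c} {v w : GkV k} (hv : CompP A f c v)
    (h : (restrict (Gk k) (Omega A f)).Reachable v w) : CompP A f c w := by
  obtain ⟨p⟩ := h
  induction p with
  | nil => exact hv
  | cons hadj _ ih => exact ih (compP_closed hv hadj)

lemma reach_pair {A : Finset (Fin k)} {f : Fin k → Fin 3} {x y : Fin k}
    (hxA : x ∉ A) (hyA : y ∉ A) (hf : f x = f y) :
    (restrict (Gk k) (Omega A f)).Reachable (.inl x) (.inl y) := by
  by_cases hxy : x = y
  · exact hxy ▸ SimpleGraph.Reachable.refl _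
  · have hP : pairV x y hxy ∉ Omega A f := by
      rw [omega_pair_iff]; rintro ⟨-, -, h⟩; exact h hf
    have h1 : (restrict (Gk k) (Omega A f)).Adj (.inl x) (pairV x y hxy) :=
      ⟨by simp [Gk, pairV], fun h => hxA h, hP⟩
    have h2 : (restrict (Gk k) (Omega A f)).Adj (pairV x y hxy) (.inl y) :=
      ⟨by simp [Gk, pairV], hP, fun h => hyA h⟩
    exact h1.reachable.trans h2.reachable

lemma comp_eq {A : Finset (Fin k)} {f : Fin k → Fin 3} {x : Fin k} (hxA : x ∉ A) :
    {b | b ∉ Omega A f ∧ (restrict (Gk k) (Omega A f)).Reachable (.inl x) b}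
      = {v | CompP A f (f x) v} := by
  ext b
  constructor
  · rintro ⟨-, hr⟩
    exact compP_reach (show CompP A f (f x) (.inl x) from ⟨hxA, rfl⟩) hr
  · intro hb
    refine ⟨compP_not_omega hb, ?_⟩
    cases b with
    | inl y => exact reach_pair hxA hb.1 hb.2.symm
    | inr S =>
      obtain ⟨hSΩ, y, hyS, hyA, hyc⟩ := hb
      have h1 : (restrict (Gk k) (Omega A f)).Reachable (.inl x) (.inl y) :=
        reach_pair hxA hyA hyc.symm
      have h2 : (restrict (Gk k) (Omega A f)).Adj (.inl y) (.inr S) :=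
        ⟨hyS, fun h => hyA h, hSΩ⟩
      exact h1.trans h2.reachable

lemma comp_isCompOf {A : Finset (Fin k)} {f : Fin k → Fin 3} {x : Fin k} (hxA : x ∉ A) :
    IsCompOf (Gk k) (Omega A f) {v | CompP A f (f x) v} :=
  ⟨.inl x, fun h => hxA h, (comp_eq hxA).symm⟩

lemma mem_nbhd_inl {A : Finset (Fin k)} {f : Fin k → Fin 3} {c : Fin 3} {a : Fin k}
    (ha : a ∈ A) {y : Fin k} (hyA : y ∉ A) (hyc : f y = c) :
    (Sum.inl a : GkV k) ∈ nbhd (Gk k) {v | CompP A f c v} := by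
  have hay : a ≠ y := fun h => hyA (h ▸ ha)
  refine ⟨fun h => h.1 ha, pairV a y hay, ⟨?_, y, by simp [pairV], hyA, hyc⟩, by simp [Gk, pairV]⟩
  show pairV a y hay ∉ Omega A f
  rw [omega_pair_iff]
  rintro ⟨h, -, -⟩; exact h ha

lemma mem_nbhd_inr {A : Finset (Fin k)} {f : Fin k → Fin 3} {c : Fin 3}
    {S : {S : Finset (Fin k) // S.card = 2}} (hS : OmegaP A f (.inr S))
    {y : Fin k} (hyS : y ∈ S.1) (hyA : y ∉ A) (hyc : f y = c) :
    (Sum.inr S : GkV k) ∈ nbhd (Gk k) {v | CompP A f c v} :=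
  ⟨fun h => h.1 hS, .inl y, ⟨hyA, hyc⟩, hyS⟩

lemma not_mem_nbhd_pair {A : Finset (Fin k)} {f : Fin k → Fin 3} {c : Fin 3}
    {x y : Fin k} (hxy : x ≠ y) (hfx : f x ≠ c) (hfy : f y ≠ c) :
    pairV x y hxy ∉ nbhd (Gk k) {v | CompP A f c v} := by
  rintro ⟨-, v, hv, hadj⟩
  cases v with
  | inr T => exact hadj
  | inl z =>
    have hzP : z ∈ ({x, y} : Finset (Fin k)) := hadj
    rcases Finset.mem_insert.1 hzP with rfl | h
    · exact hfx hv.2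
    · exact hfy ((Finset.mem_singleton.1 h) ▸ hv.2)

lemma comp_isCompOf' {A : Finset (Fin k)} {f : Fin k → Fin 3}
    (hsurj : ∀ c : Fin 3, ∃ x, x ∉ A ∧ f x = c) (c : Fin 3) :
    IsCompOf (Gk k) (Omega A f) {v | CompP A f c v} := by
  obtain ⟨x, hxA, hxc⟩ := hsurj c
  exact hxc ▸ comp_isCompOf hxA

lemma exists_cross {A : Finset (Fin k)} {f : Fin k → Fin 3}
    (hsurj : ∀ c : Fin 3, ∃ x, x ∉ A ∧ f x = c) (c : Fin 3) :
    ∃ (x y : Fin k) (hxy : x ≠ y), pairV x y hxy ∈ Omega A f ∧ f x ≠ c ∧ f y ≠ c := by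
  have h3 : ∀ c : Fin 3, ∃ c1 c2 : Fin 3, c1 ≠ c2 ∧ c1 ≠ c ∧ c2 ≠ c := by decide
  obtain ⟨c1, c2, h12, h1c, h2c⟩ := h3 c
  obtain ⟨x, hxA, hx⟩ := hsurj c1
  obtain ⟨y, hyA, hy⟩ := hsurj c2
  have hfxy : f x ≠ f y := by rw [hx, hy]; exact h12
  have hxy : x ≠ y := fun h => hfxy (h ▸ rfl)
  exact ⟨x, y, hxy, (omega_pair_iff hxy).2 ⟨hxA, hyA, hfxy⟩, hx ▸ h1c, hy ▸ h2c⟩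

theorem isPMC_Omega {A : Finset (Fin k)} {f : Fin k → Fin 3}
    (hsurj : ∀ c : Fin 3, ∃ x, x ∉ A ∧ f x = c) : IsPMC (Gk k) (Omega A f) := by
  constructor
  · -- condition (1)
    rintro C ⟨a, haΩ, rfl⟩ heq
    cases a with
    | inl x =>
      have hxA : x ∉ A := fun h => haΩ h
      rw [comp_eq hxA] at heq
      obtain ⟨u, v, huv, hP, hu, hv⟩ := exists_cross hsurj (f x)
      exact not_mem_nbhd_pair huv hu hv (heq ▸ hP)
    | inr S =>
      by_cases hz : ∃ z ∈ S.1, z ∉ A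
      · obtain ⟨z, hzS, hzA⟩ := hz
        have hadj : (restrict (Gk k) (Omega A f)).Adj (.inr S) (.inl z) :=
          ⟨hzS, haΩ, fun h => hzA h⟩
        have hsets : {b | b ∉ Omega A f ∧ (restrict (Gk k) (Omega A f)).Reachable (.inr S) b}
            = {b | b ∉ Omega A f ∧ (restrict (Gk k) (Omega A f)).Reachable (.inl z) b} := by
          ext b
          exact and_congr_right fun _ =>
            ⟨fun h => hadj.symm.reachable.trans h, fun h => hadj.reachable.trans h⟩
        rw [hsets, comp_eq hzA] at heq
        obtain ⟨u, v, huv, hP, hu, hv⟩ := exists_cross hsurj (f z)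
        exact not_mem_nbhd_pair huv hu hv (heq ▸ hP)
      · push_neg at hz
        have hsing : {b | b ∉ Omega A f ∧
            (restrict (Gk k) (Omega A f)).Reachable (.inr S) b} = {Sum.inr S} := by
          ext b
          simp only [Set.mem_setOf_eq, Set.mem_singleton_iff]
          constructor
          · rintro ⟨hbΩ, ⟨p⟩⟩
            cases p with
            | nil => rfl
            | @cons _ w _ hadj q =>
              cases w with
              | inr T => exact absurd hadj.1 (fun h => h)
              | inl z => exact absurd (hz z hadj.1) (fun h => hadj.2.2 (h))
          · rintro rfl; exact ⟨haΩ, SimpleGraph.Reachable.refl _⟩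
        rw [hsing] at heq
        obtain ⟨u, v, huv, hP, -, -⟩ := exists_cross hsurj 0
        have : pairV u v huv ∈ nbhd (Gk k) {(Sum.inr S : GkV k)} := heq ▸ hP
        obtain ⟨-, w, hw, hadj⟩ := this
        rw [Set.mem_singleton_iff] at hw
        subst hw
        exact hadj
  · -- condition (2)
    intro u hu v hv huv
    cases u with
    | inl a =>
      have ha : a ∈ A := hu
      cases v with
      | inl b =>
        have hb : b ∈ A := hv
        obtain ⟨x, hxA, hx0⟩ := hsurj 0
        exact Or.inr ⟨_, comp_isCompOf' hsurj 0,
          mem_nbhd_inl ha hxA hx0, mem_nbhd_inl hb hxA hx0⟩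
      | inr S =>
        obtain ⟨x, hxS, y, hyS, hxA, hyA, hf⟩ := id hv
        exact Or.inr ⟨_, comp_isCompOf' hsurj (f x),
          mem_nbhd_inl ha hxA rfl, mem_nbhd_inr hv hxS hxA rfl⟩
    | inr S =>
      obtain ⟨x, hxS, y, hyS, hxA, hyA, hf⟩ := id hu
      cases v with
      | inl b =>
        have hb : b ∈ A := hv
        exact Or.inr ⟨_, comp_isCompOf' hsurj (f x),
          mem_nbhd_inr hu hxS hxA rfl, mem_nbhd_inl hb hxA rfl⟩
      | inr T =>
        obtain ⟨x', hxS', y', hyS', hxA', hyA', hf'⟩ := id hv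
        have h4 : ∀ a b c d : Fin 3, a ≠ b → c ≠ d →
            (a = c ∨ a = d ∨ b = c ∨ b = d) := by decide
        rcases h4 (f x) (f y) (f x') (f y') hf hf' with h | h | h | h
        · exact Or.inr ⟨_, comp_isCompOf' hsurj (f x),
            mem_nbhd_inr hu hxS hxA rfl, mem_nbhd_inr hv hxS' hxA' h.symm⟩
        · exact Or.inr ⟨_, comp_isCompOf' hsurj (f x),
            mem_nbhd_inr hu hxS hxA rfl, mem_nbhd_inr hv hyS' hyA' h.symm⟩
        · exact Or.inr ⟨_, comp_isCompOf' hsurj (f y),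
            mem_nbhd_inr hu hyS hyA rfl, mem_nbhd_inr hv hxS' hxA' h.symm⟩
        · exact Or.inr ⟨_, comp_isCompOf' hsurj (f y),
            mem_nbhd_inr hu hyS hyA rfl, mem_nbhd_inr hv hyS' hyA' h.symm⟩

abbrev CanonTriple (A : Finset (Fin k)) (x0 x1 x2 : Fin k) : Prop :=
  (Aᶜ : Finset (Fin k)).min = x0 ∧ (Aᶜ.erase x0).min = x1 ∧ ((Aᶜ.erase x0).erase x1).min = x2

lemma canonTriple_exists {A : Finset (Fin k)} (hA : 3 ≤ (Aᶜ : Finset (Fin k)).card) :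
    ∃ x0 x1 x2, CanonTriple A x0 x1 x2 := by
  have h0 : (Aᶜ : Finset (Fin k)).Nonempty := Finset.card_pos.1 (by omega)
  set x0 := Aᶜ.min' h0 with hx0
  have h1 : ((Aᶜ : Finset (Fin k)).erase x0).Nonempty := by
    rw [← Finset.card_pos, Finset.card_erase_of_mem (Finset.min'_mem _ h0)]; omega
  set x1 := (Aᶜ.erase x0).min' h1 with hx1
  have h2 : (((Aᶜ : Finset (Fin k)).erase x0).erase x1).Nonempty := by
    rw [← Finset.card_pos, Finset.card_erase_of_mem (Finset.min'_mem _ h1),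
      Finset.card_erase_of_mem (Finset.min'_mem _ h0)]
    omega
  exact ⟨x0, x1, _, (Finset.coe_min' h0).symm, (Finset.coe_min' h1).symm,
    (Finset.coe_min' h2).symm⟩

lemma canonTriple_unique {A : Finset (Fin k)} {x0 x1 x2 y0 y1 y2 : Fin k}
    (h : CanonTriple A x0 x1 x2) (h' : CanonTriple A y0 y1 y2) :
    x0 = y0 ∧ x1 = y1 ∧ x2 = y2 := by
  obtain ⟨a0, a1, a2⟩ := h
  obtain ⟨b0, b1, b2⟩ := h'
  have e0 : x0 = y0 := by rw [a0] at b0; exact_mod_cast b0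
  subst e0
  have e1 : x1 = y1 := by rw [a1] at b1; exact_mod_cast b1
  subst e1
  refine ⟨rfl, rfl, ?_⟩
  rw [a2] at b2; exact_mod_cast b2

lemma canonTriple_props {A : Finset (Fin k)} {x0 x1 x2 : Fin k}
    (h : CanonTriple A x0 x1 x2) :
    x0 ∉ A ∧ x1 ∉ A ∧ x2 ∉ A ∧ x0 ≠ x1 ∧ x0 ≠ x2 ∧ x1 ≠ x2 := by
  obtain ⟨a0, a1, a2⟩ := h
  have h0 : x0 ∈ (Aᶜ : Finset (Fin k)) := Finset.mem_of_min a0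
  have h1 : x1 ∈ (Aᶜ : Finset (Fin k)).erase x0 := Finset.mem_of_min a1
  have h2 : x2 ∈ ((Aᶜ : Finset (Fin k)).erase x0).erase x1 := Finset.mem_of_min a2
  have h1' := Finset.mem_erase.1 h1
  have h2' := Finset.mem_erase.1 h2
  have h2'' := Finset.mem_erase.1 h2'.2
  refine ⟨Finset.mem_compl.1 h0, Finset.mem_compl.1 h1'.2, Finset.mem_compl.1 h2''.2,
    fun e => h1'.1 e.symm, fun e => h2''.1 e.symm, fun e => h2'.1 e.symm⟩

abbrev Canon (A : Finset (Fin k)) (f : Fin k → Fin 3) : Prop :=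
  ∃ x0 x1 x2, CanonTriple A x0 x1 x2 ∧ f x0 = 0 ∧ f x1 = 1 ∧ f x2 = 2 ∧ ∀ a ∈ A, f a = 0

lemma canon_surj {A : Finset (Fin k)} {f : Fin k → Fin 3} (h : Canon A f) :
    ∀ c : Fin 3, ∃ x, x ∉ A ∧ f x = c := by
  obtain ⟨x0, x1, x2, ht, h0, h1, h2, -⟩ := h
  obtain ⟨m0, m1, m2, -, -, -⟩ := canonTriple_props ht
  intro c
  fin_cases c
  · exact ⟨x0, m0, h0⟩
  · exact ⟨x1, m1, h1⟩
  · exact ⟨x2, m2, h2⟩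

lemma card_pinned (T : Finset (Fin k)) (g₀ : Fin k → Fin 3) :
    (Finset.univ.filter fun f : Fin k → Fin 3 => ∀ x ∈ T, f x = g₀ x).card
      = 3 ^ (k - T.card) := by
  rw [← Fintype.card_subtype]
  have e : {f : Fin k → Fin 3 // ∀ x ∈ T, f x = g₀ x} ≃ ({x : Fin k // x ∉ T} → Fin 3) :=
  { toFun := fun f x => f.1 x.1
    invFun := fun h => ⟨fun x => if hx : x ∈ T then g₀ x else h ⟨x, hx⟩, fun x hx => dif_pos hx⟩
    left_inv := by
      rintro ⟨f, hf⟩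
      apply Subtype.ext
      funext x
      dsimp only
      split_ifs with h
      · exact (hf x h).symm
      · rfl
    right_inv := by
      intro h
      funext x
      exact dif_neg x.2 }
  rw [Fintype.card_congr e, Fintype.card_fun, Fintype.card_fin]
  congr 1
  rw [Fintype.card_subtype_compl, Fintype.card_fin, Fintype.card_coe]

lemma canon_card {A : Finset (Fin k)} (hA : 3 ≤ (Aᶜ : Finset (Fin k)).card) :
    (Finset.univ.filter fun f : Fin k → Fin 3 => Canon A f).card
      = 3 ^ (k - A.card - 3) := by
  obtain ⟨x0, x1, x2, ht⟩ := canonTriple_exists hA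
  obtain ⟨m0, m1, m2, d01, d02, d12⟩ := canonTriple_props ht
  set T : Finset (Fin k) := insert x0 (insert x1 (insert x2 A)) with hT
  set g₀ : Fin k → Fin 3 := fun x => if x = x1 then 1 else if x = x2 then 2 else 0 with hg
  have hiff : ∀ f : Fin k → Fin 3, Canon A f ↔ ∀ x ∈ T, f x = g₀ x := by
    intro f
    constructor
    · rintro ⟨y0, y1, y2, ht', h0, h1, h2, hAll⟩
      obtain ⟨e0, e1, e2⟩ := canonTriple_unique ht' ht
      rw [e0] at h0; rw [e1] at h1; rw [e2] at h2
      intro x hx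
      simp only [hT, Finset.mem_insert] at hx
      rcases hx with rfl | rfl | rfl | hx
      · rw [h0, hg]; simp [d01, d02]
      · rw [h1, hg]; simp
      · rw [h2, hg]; simp [d12.symm]
      · rw [hAll x hx, hg]
        have hx1 : x ≠ x1 := fun e => m1 (e ▸ hx)
        have hx2 : x ≠ x2 := fun e => m2 (e ▸ hx)
        simp [hx1, hx2]
    · intro hp
      refine ⟨x0, x1, x2, ht, ?_, ?_, ?_, fun a ha => ?_⟩
      · rw [hp x0 (by simp [hT]), hg]; simp [d01, d02]
      · rw [hp x1 (by simp [hT]), hg]; simp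
      · rw [hp x2 (by simp [hT]), hg]; simp [d12.symm]
      · rw [hp a (by simp [hT, ha]), hg]
        have hx1 : a ≠ x1 := fun e => m1 (e ▸ ha)
        have hx2 : a ≠ x2 := fun e => m2 (e ▸ ha)
        simp [hx1, hx2]
  rw [Finset.filter_congr (fun f _ => by rw [hiff f]), card_pinned]
  congr 1
  have h1 : x0 ∉ insert x1 (insert x2 A) := by
    simp only [Finset.mem_insert]
    rintro (rfl | rfl | h)
    · exact d01 rfl
    · exact d02 rfl
    · exact m0 h
  have h2 : x1 ∉ insert x2 A := by
    simp only [Finset.mem_insert]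
    rintro (rfl | h)
    · exact d12 rfl
    · exact m1 h
  have hcT : T.card = A.card + 3 := by
    rw [hT, Finset.card_insert_of_notMem h1, Finset.card_insert_of_notMem h2,
      Finset.card_insert_of_notMem m2]
  omega

lemma omega_inj {A A' : Finset (Fin k)} {f f' : Fin k → Fin 3}
    (hc : Canon A f) (hc' : Canon A' f') (h : Omega A f = Omega A' f') :
    A = A' ∧ f = f' := by
  have hAA : A = A' := by
    ext a
    have := Set.ext_iff.1 h (Sum.inl a)
    exact this
  subst hAA
  refine ⟨rfl, ?_⟩
  obtain ⟨x0, x1, x2, ht, h0, h1, h2, hAll⟩ := hc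
  obtain ⟨y0, y1, y2, ht', h0', h1', h2', hAll'⟩ := hc'
  obtain ⟨e0, e1, e2⟩ := canonTriple_unique ht' ht
  subst e0; subst e1; subst e2
  obtain ⟨m0, m1, m2, -, -, -⟩ := canonTriple_props ht
  have key : ∀ x, x ∉ A → ∀ e, e ≠ x → e ∉ A → f e = f x → f' e = f x → f' x = f x := by
    intro x hxA e hex heA hfe hfe'
    have hxe : x ≠ e := fun h => hex h.symm
    have hP : pairV x e hxe ∉ Omega A f := by
      rw [omega_pair_iff]
      rintro ⟨-, -, hne⟩
      exact hne hfe.symm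
    rw [h] at hP
    rw [omega_pair_iff] at hP
    by_contra hne
    exact hP ⟨hxA, heA, fun he => hne (he.trans hfe')⟩
  funext x
  by_cases hxA : x ∈ A
  · rw [hAll x hxA, hAll' x hxA]
  · by_cases hx0 : x = y0
    · rw [hx0, h0, h0']
    by_cases hx1 : x = y1
    · rw [hx1, h1, h1']
    by_cases hx2 : x = y2
    · rw [hx2, h2, h2']
    have h3 : ∀ c : Fin 3, c = 0 ∨ c = 1 ∨ c = 2 := by decide
    rcases h3 (f x) with hv | hv | hv
    · exact (key x hxA y0 (fun e => hx0 e.symm) m0 (h0.trans hv.symm) (h0'.trans hv.symm)).symm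
    · exact (key x hxA y1 (fun e => hx1 e.symm) m1 (h1.trans hv.symm) (h1'.trans hv.symm)).symm
    · exact (key x hxA y2 (fun e => hx2 e.symm) m2 (h2.trans hv.symm) (h2'.trans hv.symm)).symm

def DD (k : ℕ) : Finset ((_ : ℕ) × (_ : Finset (Fin k)) × (Fin k → Fin 3)) :=
  (Finset.range (k - 2)).sigma fun i => (Finset.univ.powersetCard i).sigma fun A =>
    Finset.univ.filter fun f : Fin k → Fin 3 => Canon A f

lemma DD_card (k : ℕ) :
    (DD k).card = ∑ i ∈ Finset.range (k - 2), Nat.choose k i * 3 ^ (k - i - 3) := by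
  rw [DD, Finset.card_sigma]
  refine Finset.sum_congr rfl fun i hi => ?_
  rw [Finset.card_sigma]
  have hi' : i < k - 2 := Finset.mem_range.1 hi
  have hstep : ∀ A ∈ Finset.univ.powersetCard i,
      (Finset.univ.filter fun f : Fin k → Fin 3 => Canon A f).card = 3 ^ (k - i - 3) := by
    intro A hA
    have hAc : A.card = i := (Finset.mem_powersetCard.1 hA).2
    have hcompl : (Aᶜ : Finset (Fin k)).card = k - i := by
      rw [Finset.card_compl, hAc, Fintype.card_fin]
    rw [canon_card (by omega), hAc]
  rw [Finset.sum_congr rfl hstep, Finset.sum_const, Finset.card_powersetCard,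
    Finset.card_univ, Fintype.card_fin, smul_eq_mul]

lemma DD_le_ncard (k : ℕ) :
    (DD k).card ≤ {Ω : Set (GkV k) | IsPMC (Gk k) Ω}.ncard := by
  classical
  set φ : ((_ : ℕ) × (_ : Finset (Fin k)) × (Fin k → Fin 3)) → Set (GkV k) :=
    fun p => Omega p.2.1 p.2.2 with hφ
  have hinj : Set.InjOn φ (DD k) := by
    rintro ⟨i, A, f⟩ hp ⟨j, B, g⟩ hq heq
    simp only [DD, Finset.mem_coe, Finset.mem_sigma, Finset.mem_filter,
      Finset.mem_powersetCard] at hp hq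
    obtain ⟨hAB, hfg⟩ := omega_inj hp.2.2.2 hq.2.2.2 heq
    have hij : i = j := by rw [← hp.2.1.2, ← hq.2.1.2, hAB]
    subst hAB; subst hfg; subst hij; rfl
  have himg : ↑((DD k).image φ) ⊆ {Ω : Set (GkV k) | IsPMC (Gk k) Ω} := by
    intro Ω hΩ
    simp only [Finset.coe_image, Set.mem_image, Finset.mem_coe] at hΩ
    obtain ⟨⟨i, A, f⟩, hp, rfl⟩ := hΩ
    simp only [DD, Finset.mem_sigma, Finset.mem_filter] at hp
    exact isPMC_Omega (canon_surj hp.2.2.2)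
  calc (DD k).card = ((DD k).image φ).card := (Finset.card_image_of_injOn hinj).symm
    _ = (↑((DD k).image φ) : Set (Set (GkV k))).ncard := (Set.ncard_coe_finset _).symm
    _ ≤ {Ω : Set (GkV k) | IsPMC (Gk k) Ω}.ncard :=
        Set.ncard_le_ncard himg (Set.toFinite _)

theorem part1 (k : ℕ) :
    ∑ i ∈ Finset.range (k - 2), Nat.choose k i * 3 ^ (k - i) ≤
      27 * {Ω : Set (GkV k) | IsPMC (Gk k) Ω}.ncard := by
  have h1 : ∑ i ∈ Finset.range (k - 2), Nat.choose k i * 3 ^ (k - i)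
      = 27 * ∑ i ∈ Finset.range (k - 2), Nat.choose k i * 3 ^ (k - i - 3) := by
    rw [Finset.mul_sum]
    refine Finset.sum_congr rfl fun i hi => ?_
    have hi' : i < k - 2 := Finset.mem_range.1 hi
    have : k - i = (k - i - 3) + 3 := by omega
    conv_lhs => rw [this]
    rw [pow_add]
    ring
  rw [h1]
  exact Nat.mul_le_mul_left 27 ((DD_card k) ▸ DD_le_ncard k)

lemma binom_sum (k : ℕ) :
    ∑ i ∈ Finset.range (k + 1), Nat.choose k i * 3 ^ (k - i) = 4 ^ k := by
  have := add_pow (R := ℕ) 1 3 k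
  rw [show (1 + 3 : ℕ) = 4 from rfl] at this
  rw [this]
  refine Finset.sum_congr rfl fun i hi => ?_
  rw [one_pow, one_mul, mul_comm, Nat.cast_id]

lemma grow : ∀ m : ℕ, 2 * (9 * (m + 5) * (m + 5) + 3 * (m + 5) + 1) ≤ 4 ^ (m + 5) := by
  intro m
  induction m with
  | zero => norm_num
  | succ n ih =>
    have h4 : 4 ^ (n + 1 + 5) = 4 * 4 ^ (n + 5) := by ring
    rw [h4]
    nlinarith [ih]

lemma tail_bound {k : ℕ} (hk : 5 ≤ k) :
    4 ^ k ≤ 2 * ∑ i ∈ Finset.range (k - 2), Nat.choose k i * 3 ^ (k - i) := by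
  have hsplit : ∑ i ∈ Finset.range (k + 1), Nat.choose k i * 3 ^ (k - i)
      = ∑ i ∈ Finset.range (k - 2), Nat.choose k i * 3 ^ (k - i)
        + Nat.choose k (k - 2) * 3 ^ (k - (k - 2))
        + Nat.choose k (k - 1) * 3 ^ (k - (k - 1))
        + Nat.choose k k * 3 ^ (k - k) := by
    have h1 : k + 1 = (k - 2) + 1 + 1 + 1 := by omega
    rw [h1, Finset.sum_range_succ, Finset.sum_range_succ, Finset.sum_range_succ]
    have e1 : k - 2 + 1 = k - 1 := by omega
    have e2 : k - 2 + 1 + 1 = k := by omega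
    rw [e1, e2]
  have hE : Nat.choose k (k - 2) * 3 ^ (k - (k - 2))
        + Nat.choose k (k - 1) * 3 ^ (k - (k - 1))
        + Nat.choose k k * 3 ^ (k - k) ≤ 9 * k * k + 3 * k + 1 := by
    have c2 : Nat.choose k (k - 2) = Nat.choose k 2 := by
      rw [← Nat.choose_symm (by omega : 2 ≤ k)]
    have c1 : Nat.choose k (k - 1) = Nat.choose k 1 := by
      rw [← Nat.choose_symm (by omega : 1 ≤ k)]
    have e2 : k - (k - 2) = 2 := by omega
    have e1 : k - (k - 1) = 1 := by omega
    rw [c2, c1, e2, e1, Nat.sub_self, Nat.choose_self, Nat.choose_one_right,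
      Nat.choose_two_right]
    have : k * (k - 1) / 2 ≤ k * k := Nat.le_trans (Nat.div_le_self _ _)
      (Nat.mul_le_mul_left _ (by omega))
    simp only [pow_zero, pow_one]
    nlinarith [this]
  have hgrow : 2 * (9 * k * k + 3 * k + 1) ≤ 4 ^ k := by
    obtain ⟨m, rfl⟩ : ∃ m, k = m + 5 := ⟨k - 5, by omega⟩
    exact grow m
  have hbin := binom_sum k
  omega

theorem part2 : ∃ c : ℝ, 0 < c ∧ ∃ N : ℕ, ∀ k ≥ N,
    c * 4 ^ k ≤ ({Ω : Set (GkV k) | IsPMC (Gk k) Ω}.ncard : ℝ) := by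
  refine ⟨1 / 54, by norm_num, 5, fun k hk => ?_⟩
  have h1 := part1 k
  have h2 := tail_bound hk
  have h3 : 4 ^ k ≤ 54 * {Ω : Set (GkV k) | IsPMC (Gk k) Ω}.ncard := by omega
  have h4 : (4 : ℝ) ^ k ≤ 54 * ({Ω : Set (GkV k) | IsPMC (Gk k) Ω}.ncard : ℝ) := by
    exact_mod_cast h3
  linarith

end PMCAux

theorem stmt10 :
    (∀ k : ℕ, ∑ i ∈ Finset.range (k - 2), Nat.choose k i * 3 ^ (k - i) ≤
      27 * {Ω : Set (GkV k) | IsPMC (Gk k) Ω}.ncard) ∧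
    ∃ c : ℝ, 0 < c ∧ ∃ N : ℕ, ∀ k ≥ N,
      c * 4 ^ k ≤ ({Ω : Set (GkV k) | IsPMC (Gk k) Ω}.ncard : ℝ) :=
  ⟨PMCAux.part1, PMCAux.part2⟩
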